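/- arXiv:1705.09328 — 6 statements merged into one kernel-verified Lean document; each statement's English description precedes it below -/
import Mathlib

section
/- If every club has α_c = 1 and γ_c = 0 and every club has exactly one donor and one patient, then a set of edges in which each donor appears in at most one edge and each patient appears in at most one edge is feasible if and only if the edge set decomposes into vertex-disjoint directed cycles of the induced graph on clubs (where club u points to club v if an edge from u's donor to v's patient is selected). -/
/-- every club has one donor, one patient, `α = 1`, `γ = 0`.
Clubs are the vertices of type `C`, and `S` is the set of selected inter-club
edges (club `u` points to club `v` if an edge from `u`'s donor to `v`'s
patient is selected); since each donor donates at most once and each patient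
receives at most once, every club has out-degree ≤ 1 and in-degree ≤ 1.
Feasibility (`n_d^ext ≤ n_p^ext` for each club) holds iff `S` decomposes into
vertex-disjoint directed cycles, i.e. iff `S` is the set of non-fixed-point
moves of some permutation of the clubs. -/
theorem stmt_1 {C : Type} [Fintype C] [DecidableEq C] (S : Finset (C × C))
    (hloop : ∀ c, (c, c) ∉ S)
    (hout : ∀ c, (S.filter fun e => e.1 = c).card ≤ 1)
    (hin : ∀ c, (S.filter fun e => e.2 = c).card ≤ 1) :
    (∀ c, (S.filter fun e => e.1 = c).card ≤ (S.filter fun e => e.2 = c).card)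
      ↔ ∃ σ : Equiv.Perm C, ∀ e : C × C, e ∈ S ↔ σ e.1 = e.2 ∧ e.1 ≠ e.2 := by
  classical
  constructor
  · intro hfe
    -- both sums of fiber cardinalities equal `S.card`
    have hsum1 : ∑ c, (S.filter fun e => e.1 = c).card = S.card :=
      (Finset.card_eq_sum_card_fiberwise (fun e _ => Finset.mem_univ e.1)).symm
    have hsum2 : ∑ c, (S.filter fun e => e.2 = c).card = S.card :=
      (Finset.card_eq_sum_card_fiberwise (fun e _ => Finset.mem_univ e.2)).symm
    have heq : ∀ c, (S.filter fun e => e.1 = c).card = (S.filter fun e => e.2 = c).card := by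
      have h := (Finset.sum_eq_sum_iff_of_le (fun i _ => hfe i)).mp
        (hsum1.trans hsum2.symm)
      exact fun c => h c (Finset.mem_univ c)
    -- the successor function
    set f : C → C := fun c => if h : ∃ d, (c, d) ∈ S then h.choose else c with hf
    have hfS : ∀ a b : C, (a, b) ∈ S → f a = b := by
      intro a b hab
      have h : ∃ d, (a, d) ∈ S := ⟨b, hab⟩
      have hc : (a, h.choose) ∈ S := h.choose_spec
      have hcb : (a, h.choose) = (a, b) :=
        Finset.card_le_one.mp (hout a) (a, h.choose)
          (Finset.mem_filter.mpr ⟨hc, rfl⟩) (a, b) (Finset.mem_filter.mpr ⟨hab, rfl⟩)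
      have h2 : h.choose = b := congrArg Prod.snd hcb
      simp only [hf, dif_pos h, h2]
    have hfno : ∀ a : C, (¬ ∃ d, (a, d) ∈ S) → f a = a := by
      intro a h; simp only [hf, dif_neg h]
    have hsrc : ∀ a : C, (¬ ∃ d, (a, d) ∈ S) → ∀ x, (x, a) ∉ S := by
      intro a h x hx
      have hob : (S.filter fun e => e.1 = a).card = 0 := by
        rw [Finset.card_eq_zero, Finset.filter_eq_empty_iff]
        intro e he hea
        exact h ⟨e.2, by rwa [← hea, Prod.mk.eta]⟩
      have hib : 0 < (S.filter fun e => e.2 = a).card :=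
        Finset.card_pos.mpr ⟨(x, a), Finset.mem_filter.mpr ⟨hx, rfl⟩⟩
      have := heq a
      omega
    have hinj : Function.Injective f := by
      intro a b hab
      by_cases ha : ∃ d, (a, d) ∈ S <;> by_cases hb : ∃ d, (b, d) ∈ S
      · obtain ⟨x, hx⟩ := ha
        obtain ⟨y, hy⟩ := hb
        have h1 : f a = x := hfS a x hx
        have h2 : f b = y := hfS b y hy
        have hxy : x = y := by rw [← h1, ← h2, hab]
        subst hxy
        have h3 : (a, x) = (b, x) :=
          Finset.card_le_one.mp (hin x) (a, x)
            (Finset.mem_filter.mpr ⟨hx, rfl⟩) (b, x)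
            (Finset.mem_filter.mpr ⟨hy, rfl⟩)
        exact congrArg Prod.fst h3
      · obtain ⟨x, hx⟩ := ha
        have h1 : f a = x := hfS a x hx
        have h2 : f b = b := hfno b hb
        have hxb : x = b := by rw [← h1, ← h2, hab]
        subst hxb
        exact absurd hx (hsrc x hb a)
      · obtain ⟨y, hy⟩ := hb
        have h1 : f a = a := hfno a ha
        have h2 : f b = y := hfS b y hy
        have hya : y = a := by rw [← h2, ← h1, hab]
        subst hya
        exact absurd hy (hsrc y ha b)
      · rw [← hfno a ha, ← hfno b hb, hab]
    refine ⟨Equiv.ofBijective f (Finite.injective_iff_bijective.mp hinj), ?_⟩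
    intro e
    constructor
    · intro he
      have he' : (e.1, e.2) ∈ S := by rwa [Prod.mk.eta]
      refine ⟨hfS e.1 e.2 he', ?_⟩
      intro h
      exact hloop e.2 (h ▸ he')
    · rintro ⟨hσ, hne⟩
      have hσ' : f e.1 = e.2 := hσ
      by_cases h : ∃ d, (e.1, d) ∈ S
      · have hc : (e.1, h.choose) ∈ S := h.choose_spec
        have : f e.1 = h.choose := by simp only [hf, dif_pos h]
        rw [this] at hσ'
        rwa [← Prod.mk.eta (p := e), ← hσ']
      · exact absurd ((hfno e.1 h).symm.trans hσ') hne
  · rintro ⟨σ, hσ⟩ c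
    by_cases h : σ c = c
    · have hob : (S.filter fun e => e.1 = c).card = 0 := by
        rw [Finset.card_eq_zero, Finset.filter_eq_empty_iff]
        intro e he hec
        obtain ⟨h1, h2⟩ := (hσ e).mp he
        rw [hec] at h1 h2
        exact h2 (h.symm.trans h1)
      omega
    · have hs : σ.symm c ≠ c := fun hh => h (by conv_lhs => rw [← hh, σ.apply_symm_apply])
      have hmem : (σ.symm c, c) ∈ S :=
        (hσ (σ.symm c, c)).mpr ⟨σ.apply_symm_apply c, hs⟩
      have hib : 0 < (S.filter fun e => e.2 = c).card :=
        Finset.card_pos.mpr ⟨(σ.symm c, c), Finset.mem_filter.mpr ⟨hmem, rfl⟩⟩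
      have := hout c
      omega
end

section
/- In the NP-hardness construction from SET-PACKING, if a disjoint subfamily X ⊆ S of size k exists, then there is a feasible edge selection of total weight at least kM and strictly less than (k+1)M, where M = |U| + 1. -/
/-- An exchange club: a set of donors, a set of patients, a matching
multiplier `alpha` and a matching debt `gamma`. -/
structure Club (D P : Type) where
  donors : Finset D
  patients : Finset P
  alpha : ℚ
  gamma : ℚ

variable {D P : Type} [DecidableEq D] [DecidableEq P]

/-- Number of selected edges from donors of club `c` to patients outside `c`. -/
def ndExt (c : Club D P) (S : Finset (D × P)) : ℕ :=
  (S.filter fun e => e.1 ∈ c.donors ∧ e.2 ∉ c.patients).card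

/-- Number of selected edges from donors outside `c` to patients of club `c`. -/
def npExt (c : Club D P) (S : Finset (D × P)) : ℕ :=
  (S.filter fun e => e.1 ∉ c.donors ∧ e.2 ∈ c.patients).card

/-- The feasibility constraint of club `c` for a simultaneous selection `S`:
`n_d^ext ≤ α_c · n_p^ext + γ_c`. -/
def ClubOk (c : Club D P) (S : Finset (D × P)) : Prop :=
  (ndExt c S : ℚ) ≤ c.alpha * (npExt c S : ℚ) + c.gamma

/-- Each donor donates at most once and each patient receives at most once. -/
def DonorPatientCaps (S : Finset (D × P)) : Prop :=
  (∀ d, (S.filter fun e => e.1 = d).card ≤ 1) ∧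
  (∀ p, (S.filter fun e => e.2 = p).card ≤ 1)

/-! The explicit NP-hardness construction from SET-PACKING. -/

variable (U : Type) [Fintype U] [DecidableEq U]

/-- Donors: one item donor per item `u ∈ U` (for club `a_u`), and one gate
donor per subset `s` (for club `b_s`). -/
abbrev Don (U : Type) := U ⊕ Finset U

/-- Patients: one patient `(s, u)` inside gate club `b_s` for each `u ∈ s`,
and one patient per subset `s` (for club `c_s`). -/
abbrev Pat (U : Type) := (Finset U × U) ⊕ Finset U

/-- Item club `a_u`: one donor, no patients, `γ = 1`. -/
def itemClub (u : U) : Club (Don U) (Pat U) := ⟨{Sum.inl u}, ∅, 1, 1⟩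

/-- Gate club `b_s`: one donor, `|s|` patients, `α = 1/|s|`, `γ = 0`. -/
def gateClub (s : Finset U) : Club (Don U) (Pat U) :=
  ⟨{Sum.inr s}, s.image fun u => Sum.inl (s, u), 1 / (s.card : ℚ), 0⟩

/-- Sink club `c_s`: no donors, one patient. -/
def sinkClub (s : Finset U) : Club (Don U) (Pat U) := ⟨∅, {Sum.inr s}, 1, 0⟩

/-- Compatibility edges: a weight-`M` edge from the donor of `b_s` to the
patient of `c_s` for each `s ∈ fam`, and a weight-1 edge from the donor of
`a_u` to patient `(s, u)` of `b_s` whenever `u ∈ s ∈ fam`. -/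
def edges (fam : Finset (Finset U)) : Finset (Don U × Pat U) :=
  (fam.image fun s => (Sum.inr s, Sum.inr s)) ∪
    fam.biUnion fun s => s.image fun u => (Sum.inl u, Sum.inl (s, u))

/-- Edge weights: `M = |U| + 1` on the gate-to-sink edges, `1` elsewhere. -/
def wt : Don U × Pat U → ℚ
  | (Sum.inr _, Sum.inr _) => (Fintype.card U : ℚ) + 1
  | _ => 1

/-- Feasibility of all the clubs of the construction. -/
def AllClubsOk (fam : Finset (Finset U)) (S : Finset (Don U × Pat U)) : Prop :=
  (∀ u : U, ClubOk (itemClub U u) S) ∧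
  (∀ s ∈ fam, ClubOk (gateClub U s) S) ∧
  (∀ s ∈ fam, ClubOk (sinkClub U s) S)

/-- if a pairwise disjoint subfamily `X ⊆ fam` of size `k`
exists, then the constructed instance has a feasible edge selection of total
weight at least `kM` and strictly less than `(k+1)M`, where `M = |U| + 1`. -/
theorem stmt_5 (fam : Finset (Finset U)) (hne : ∀ s ∈ fam, s.Nonempty) (k : ℕ)
    (X : Finset (Finset U)) (hX : X ⊆ fam) (hXcard : X.card = k)
    (hXdisj : (X : Set (Finset U)).Pairwise fun a b => Disjoint a b) :
    ∃ S ⊆ edges U fam, DonorPatientCaps S ∧ AllClubsOk U fam S ∧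
      (k : ℚ) * ((Fintype.card U : ℚ) + 1) ≤ ∑ e ∈ S, wt U e ∧
      ∑ e ∈ S, wt U e < ((k : ℚ) + 1) * ((Fintype.card U : ℚ) + 1) := by
  classical
  set A : Finset (Don U × Pat U) :=
    X.image fun s => (Sum.inr s, Sum.inr s) with hA
  set B : Finset (Don U × Pat U) :=
    X.biUnion fun s => s.image fun u => (Sum.inl u, Sum.inl (s, u)) with hB
  have hmem : ∀ e : Don U × Pat U, e ∈ A ∪ B ↔
      ((∃ s ∈ X, e = (Sum.inr s, Sum.inr s)) ∨
        ∃ s ∈ X, ∃ u ∈ s, e = (Sum.inl u, Sum.inl (s, u))) := by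
    intro e
    constructor
    · intro h
      rcases Finset.mem_union.1 h with h | h
      · obtain ⟨s, hs, rfl⟩ := Finset.mem_image.1 h
        exact Or.inl ⟨s, hs, rfl⟩
      · obtain ⟨s, hs, he⟩ := Finset.mem_biUnion.1 h
        obtain ⟨u, hu, rfl⟩ := Finset.mem_image.1 he
        exact Or.inr ⟨s, hs, u, hu, rfl⟩
    · rintro (⟨s, hs, rfl⟩ | ⟨s, hs, u, hu, rfl⟩)
      · exact Finset.mem_union_left _ (Finset.mem_image_of_mem _ hs)
      · exact Finset.mem_union_right _
          (Finset.mem_biUnion.2 ⟨s, hs, Finset.mem_image_of_mem _ hu⟩)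
  have huniq : ∀ s ∈ X, ∀ t ∈ X, ∀ u : U, u ∈ s → u ∈ t → s = t := by
    intro s hs t ht u hus hut
    by_contra h
    exact Finset.disjoint_left.mp (hXdisj hs ht h) hus hut
  refine ⟨A ∪ B, ?_, ?_, ?_, ?_, ?_⟩
  · -- subset of edges
    intro e he
    rcases (hmem e).1 he with ⟨s, hs, rfl⟩ | ⟨s, hs, u, hu, rfl⟩
    · exact Finset.mem_union_left _ (Finset.mem_image_of_mem _ (hX hs))
    · exact Finset.mem_union_right _
        (Finset.mem_biUnion.2 ⟨s, hX hs, Finset.mem_image_of_mem _ hu⟩)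
  · -- caps
    constructor
    · intro d
      refine Finset.card_le_one.2 ?_
      intro a ha b hb
      obtain ⟨haS, had⟩ := Finset.mem_filter.1 ha
      obtain ⟨hbS, hbd⟩ := Finset.mem_filter.1 hb
      rcases (hmem a).1 haS with ⟨s, hs, rfl⟩ | ⟨s, hs, u, hu, rfl⟩ <;>
        rcases (hmem b).1 hbS with ⟨t, ht, rfl⟩ | ⟨t, ht, v, hv, rfl⟩ <;>
        simp only at had hbd
      · obtain rfl : s = t := Sum.inr.inj (had.trans hbd.symm); rfl
      · exact absurd (had.trans hbd.symm) (by simp)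
      · exact absurd (had.trans hbd.symm) (by simp)
      · obtain rfl : u = v := Sum.inl.inj (had.trans hbd.symm)
        obtain rfl : s = t := huniq s hs t ht u hu hv
        rfl
    · intro p
      refine Finset.card_le_one.2 ?_
      intro a ha b hb
      obtain ⟨haS, had⟩ := Finset.mem_filter.1 ha
      obtain ⟨hbS, hbd⟩ := Finset.mem_filter.1 hb
      rcases (hmem a).1 haS with ⟨s, hs, rfl⟩ | ⟨s, hs, u, hu, rfl⟩ <;>
        rcases (hmem b).1 hbS with ⟨t, ht, rfl⟩ | ⟨t, ht, v, hv, rfl⟩ <;>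
        simp only at had hbd
      · obtain rfl : s = t := Sum.inr.inj (had.trans hbd.symm); rfl
      · exact absurd (had.trans hbd.symm) (by simp)
      · exact absurd (had.trans hbd.symm) (by simp)
      · have h := Sum.inl.inj (had.trans hbd.symm)
        obtain ⟨rfl, rfl⟩ : s = t ∧ u = v := ⟨congrArg Prod.fst h, congrArg Prod.snd h⟩
        rfl
  · -- all clubs ok
    refine ⟨?_, ?_, ?_⟩
    · -- item clubs
      intro u
      have hnd : ndExt (itemClub U u) (A ∪ B) ≤ 1 := by
        refine Finset.card_le_one.2 ?_
        intro a ha b hb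
        obtain ⟨haS, had, -⟩ := Finset.mem_filter.1 ha
        obtain ⟨hbS, hbd, -⟩ := Finset.mem_filter.1 hb
        simp only [itemClub, Finset.mem_singleton] at had hbd
        rcases (hmem a).1 haS with ⟨s, hs, rfl⟩ | ⟨s, hs, w, hw, rfl⟩
        · exact absurd had (by simp)
        rcases (hmem b).1 hbS with ⟨t, ht, rfl⟩ | ⟨t, ht, v, hv, rfl⟩
        · exact absurd hbd (by simp)
        have hwu : w = u := Sum.inl.inj had
        have hvu : v = u := Sum.inl.inj hbd
        obtain rfl : s = t := huniq s hs t ht u (hwu ▸ hw) (hvu ▸ hv)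
        rw [hwu, hvu]
      show (ndExt (itemClub U u) (A ∪ B) : ℚ) ≤
        (itemClub U u).alpha * (npExt (itemClub U u) (A ∪ B) : ℚ) + (itemClub U u).gamma
      have h1 : (ndExt (itemClub U u) (A ∪ B) : ℚ) ≤ 1 := by exact_mod_cast hnd
      have h2 : (0 : ℚ) ≤ (npExt (itemClub U u) (A ∪ B) : ℚ) := Nat.cast_nonneg _
      have ha : (itemClub U u).alpha = 1 := rfl
      have hg : (itemClub U u).gamma = 1 := rfl
      rw [ha, hg]; linarith
    · -- gate clubs
      intro s hsfam
      show (ndExt (gateClub U s) (A ∪ B) : ℚ) ≤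
        (gateClub U s).alpha * (npExt (gateClub U s) (A ∪ B) : ℚ) + (gateClub U s).gamma
      have ha : (gateClub U s).alpha = 1 / (s.card : ℚ) := rfl
      have hg : (gateClub U s).gamma = 0 := rfl
      rw [ha, hg]
      by_cases hsX : s ∈ X
      · have hc : 0 < (s.card : ℚ) := by
          exact_mod_cast Finset.card_pos.2 (hne s hsfam)
        have hnd : ndExt (gateClub U s) (A ∪ B) ≤ 1 := by
          refine Finset.card_le_one.2 ?_
          intro a ha' b hb'
          obtain ⟨haS, had, -⟩ := Finset.mem_filter.1 ha'
          obtain ⟨hbS, hbd, -⟩ := Finset.mem_filter.1 hb'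
          simp only [gateClub, Finset.mem_singleton] at had hbd
          rcases (hmem a).1 haS with ⟨t, ht, rfl⟩ | ⟨t, ht, w, hw, rfl⟩
          swap
          · exact absurd had (by simp)
          rcases (hmem b).1 hbS with ⟨t', ht', rfl⟩ | ⟨t', ht', v, hv, rfl⟩
          swap
          · exact absurd hbd (by simp)
          obtain rfl : t = s := Sum.inr.inj had
          obtain rfl : t' = t := Sum.inr.inj hbd
          rfl
        have hnp : s.card ≤ npExt (gateClub U s) (A ∪ B) := by
          have hsub : (s.image fun u => ((Sum.inl u : Don U), (Sum.inl (s, u) : Pat U))) ⊆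
              (A ∪ B).filter fun e =>
                e.1 ∉ (gateClub U s).donors ∧ e.2 ∈ (gateClub U s).patients := by
            intro e he
            obtain ⟨u, hu, rfl⟩ := Finset.mem_image.1 he
            refine Finset.mem_filter.2 ⟨(hmem _).2 (Or.inr ⟨s, hsX, u, hu, rfl⟩), ?_, ?_⟩
            · simp [gateClub]
            · simp only [gateClub]
              exact Finset.mem_image_of_mem _ hu
          have hinj : (s.image fun u => ((Sum.inl u : Don U), (Sum.inl (s, u) : Pat U))).card
              = s.card :=
            Finset.card_image_of_injOn fun u _ v _ h => Sum.inl.inj (congrArg Prod.fst h)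
          calc s.card = _ := hinj.symm
            _ ≤ _ := Finset.card_le_card hsub
        have h1 : (ndExt (gateClub U s) (A ∪ B) : ℚ) ≤ 1 := by exact_mod_cast hnd
        have h2 : (s.card : ℚ) ≤ (npExt (gateClub U s) (A ∪ B) : ℚ) := by exact_mod_cast hnp
        have h3 : (1 : ℚ) ≤ 1 / (s.card : ℚ) * (npExt (gateClub U s) (A ∪ B) : ℚ) := by
          rw [div_mul_eq_mul_div, one_mul, le_div_iff₀ hc, one_mul]
          exact h2
        linarith
      · have hnd0 : ndExt (gateClub U s) (A ∪ B) = 0 := by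
          rw [ndExt, Finset.card_eq_zero, Finset.filter_eq_empty_iff]
          rintro e heS ⟨h1, -⟩
          simp only [gateClub, Finset.mem_singleton] at h1
          rcases (hmem e).1 heS with ⟨t, ht, rfl⟩ | ⟨t, ht, w, hw, rfl⟩
          · obtain rfl : t = s := Sum.inr.inj h1
            exact hsX ht
          · exact absurd h1 (by simp)
        rw [hnd0]
        have h2 : (0 : ℚ) ≤ (npExt (gateClub U s) (A ∪ B) : ℚ) := Nat.cast_nonneg _
        have hc0 : (0 : ℚ) ≤ (s.card : ℚ) := Nat.cast_nonneg _
        have : (0:ℚ) ≤ 1 / (s.card : ℚ) * (npExt (gateClub U s) (A ∪ B) : ℚ) := by positivity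
        push_cast
        linarith
    · -- sink clubs
      intro s _
      show (ndExt (sinkClub U s) (A ∪ B) : ℚ) ≤
        (sinkClub U s).alpha * (npExt (sinkClub U s) (A ∪ B) : ℚ) + (sinkClub U s).gamma
      have ha : (sinkClub U s).alpha = 1 := rfl
      have hg : (sinkClub U s).gamma = 0 := rfl
      have hnd0 : ndExt (sinkClub U s) (A ∪ B) = 0 := by
        simp [ndExt, sinkClub]
      rw [ha, hg, hnd0]
      have h2 : (0 : ℚ) ≤ (npExt (sinkClub U s) (A ∪ B) : ℚ) := Nat.cast_nonneg _
      push_cast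
      linarith
  all_goals {
    have hABdisj : Disjoint A B := by
      rw [Finset.disjoint_left]
      intro e heA heB
      obtain ⟨s, hs, rfl⟩ := Finset.mem_image.1 heA
      obtain ⟨t, ht, he⟩ := Finset.mem_biUnion.1 heB
      obtain ⟨u, hu, h⟩ := Finset.mem_image.1 he
      simp [Prod.ext_iff] at h
    have hsum : ∑ e ∈ A ∪ B, wt U e =
        (k : ℚ) * ((Fintype.card U : ℚ) + 1) + ∑ s ∈ X, (s.card : ℚ) := by
      rw [Finset.sum_union hABdisj]
      congr 1
      · rw [hA, Finset.sum_image (fun a _ b _ h => Sum.inr.inj (congrArg Prod.fst h))]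
        have h1 : ∀ s ∈ X, wt U (Sum.inr s, Sum.inr s) = (Fintype.card U : ℚ) + 1 :=
          fun _ _ => rfl
        rw [Finset.sum_congr rfl h1, Finset.sum_const, hXcard, nsmul_eq_mul]
      · rw [hB, Finset.sum_biUnion ?_]
        · refine Finset.sum_congr rfl fun s hs => ?_
          rw [Finset.sum_image (fun u _ v _ h => Sum.inl.inj (congrArg Prod.fst h))]
          have h1 : ∀ u ∈ s, wt U (Sum.inl u, Sum.inl (s, u)) = 1 := fun _ _ => rfl
          rw [Finset.sum_congr rfl h1, Finset.sum_const, nsmul_eq_mul, mul_one]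
        · intro a ha b hb hab
          rw [Function.onFun, Finset.disjoint_left]
          intro e hea heb
          obtain ⟨u, hu, rfl⟩ := Finset.mem_image.1 hea
          obtain ⟨v, hv, h⟩ := Finset.mem_image.1 heb
          apply hab
          have := congrArg Prod.snd h
          simp only at this
          exact (congrArg Prod.fst (Sum.inl.inj this)).symm
    have hCle : ∑ s ∈ X, s.card ≤ Fintype.card U := by
      have h1 : ∑ s ∈ X, s.card = (X.biUnion id).card :=
        (Finset.card_biUnion fun a ha b hb h => hXdisj ha hb h).symm
      have h2 : (X.biUnion id).card ≤ Fintype.card U := by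
        simpa using Finset.card_le_univ (X.biUnion id)
      omega
    have hC : ∑ s ∈ X, (s.card : ℚ) ≤ (Fintype.card U : ℚ) := by
      push_cast [← Nat.cast_sum]
      exact_mod_cast hCle
    have hC0 : (0:ℚ) ≤ ∑ s ∈ X, (s.card : ℚ) :=
      Finset.sum_nonneg fun _ _ => Nat.cast_nonneg _
    rw [hsum]
    first
      | linarith
      | nlinarith
  }
end

section
/- In the NP-hardness construction from SET-PACKING, if a feasible edge selection has total weight w with kM ≤ w < (k+1)M (M = |U| + 1), then exactly k of the weight-M edges are selected, and the corresponding k subsets S_j are pairwise disjoint, yielding a set packing of size k. -/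
variable {D P : Type} [DecidableEq D] [DecidableEq P]

/-! The explicit NP-hardness construction from SET-PACKING. -/

variable (U : Type) [Fintype U] [DecidableEq U]

/-- if the constructed instance has a feasible edge selection `S`
of total weight `w` with `kM ≤ w < (k+1)M` (`M = |U| + 1`), then exactly `k`
of the weight-`M` gate-to-sink edges are selected and the corresponding `k`
subsets are pairwise disjoint, yielding a set packing of size `k`. -/
theorem stmt_6 (fam : Finset (Finset U)) (hne : ∀ s ∈ fam, s.Nonempty) (k : ℕ)
    (S : Finset (Don U × Pat U)) (hS : S ⊆ edges U fam)
    (hcaps : DonorPatientCaps S) (hok : AllClubsOk U fam S)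
    (hlo : (k : ℚ) * ((Fintype.card U : ℚ) + 1) ≤ ∑ e ∈ S, wt U e)
    (hhi : ∑ e ∈ S, wt U e < ((k : ℚ) + 1) * ((Fintype.card U : ℚ) + 1)) :
    (S.filter fun e => ∃ s : Finset U, e = (Sum.inr s, Sum.inr s)).card = k ∧
    ∃ X ⊆ fam, X.card = k ∧
      ((X : Set (Finset U)).Pairwise fun a b => Disjoint a b) ∧
      (∀ s ∈ fam, (s ∈ X ↔ (Sum.inr s, Sum.inr s) ∈ S)) := by
  classical
  obtain ⟨hd, hp⟩ := hcaps
  have hfst : ∀ e ∈ S, ∀ e' ∈ S, e.1 = e'.1 → e = e' := by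
    intro e he e' he' h
    by_contra hne'
    have h2 : ({e, e'} : Finset (Don U × Pat U)) ⊆ S.filter fun x => x.1 = e.1 := by
      intro x hx
      simp only [Finset.mem_insert, Finset.mem_singleton] at hx
      rcases hx with rfl | rfl <;> simp [Finset.mem_filter, he, he', h]
    have h3 := (Finset.card_le_card h2).trans (hd e.1)
    rw [Finset.card_pair hne'] at h3; omega
  have hsnd : ∀ e ∈ S, ∀ e' ∈ S, e.2 = e'.2 → e = e' := by
    intro e he e' he' h
    by_contra hne'
    have h2 : ({e, e'} : Finset (Don U × Pat U)) ⊆ S.filter fun x => x.2 = e.2 := by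
      intro x hx
      simp only [Finset.mem_insert, Finset.mem_singleton] at hx
      rcases hx with rfl | rfl <;> simp [Finset.mem_filter, he, he', h]
    have h3 := (Finset.card_le_card h2).trans (hp e.2)
    rw [Finset.card_pair hne'] at h3; omega
  have hmem : ∀ e ∈ S, (∃ s ∈ fam, e = (Sum.inr s, Sum.inr s)) ∨
      (∃ s ∈ fam, ∃ u ∈ s, e = (Sum.inl u, Sum.inl (s, u))) := by
    intro e he
    have h := hS he
    simp only [edges, Finset.mem_union, Finset.mem_image, Finset.mem_biUnion] at h
    rcases h with ⟨s, hs, h⟩ | ⟨s, hs, u, hu, h⟩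
    · exact Or.inl ⟨s, hs, h.symm⟩
    · exact Or.inr ⟨s, hs, u, hu, h.symm⟩
  -- gate lemma
  have hgate : ∀ s ∈ fam, (Sum.inr s, Sum.inr s) ∈ S → ∀ u ∈ s,
      (Sum.inl u, Sum.inl (s, u)) ∈ S := by
    intro s hs hg u hu
    have hok2 := hok.2.1 s hs
    have hcard : 0 < s.card := Finset.card_pos.mpr (hne s hs)
    have hnd : 1 ≤ ndExt (gateClub U s) S := by
      refine Finset.card_pos.mpr ⟨(Sum.inr s, Sum.inr s), ?_⟩
      simp [ndExt, gateClub, hg]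
    set T := S.filter (fun e => e.1 ∉ (gateClub U s).donors ∧ e.2 ∈ (gateClub U s).patients)
      with hT
    have hTnp : npExt (gateClub U s) S = T.card := rfl
    have hinj : Set.InjOn Prod.snd (T : Set (Don U × Pat U)) := fun e he e' he' h =>
      hsnd e (Finset.mem_filter.mp he).1 e' (Finset.mem_filter.mp he').1 h
    have himg : T.image Prod.snd ⊆ s.image (fun v => Sum.inl (s, v)) := by
      intro p hp
      obtain ⟨e, he, rfl⟩ := Finset.mem_image.mp hp
      exact (Finset.mem_filter.mp he).2.2
    have hcardT : (T.image Prod.snd).card = T.card := Finset.card_image_of_injOn hinj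
    have hsimg : (s.image (fun v => Sum.inl (s, v) : U → Pat U)).card = s.card := by
      refine Finset.card_image_of_injOn ?_
      intro a _ b _ h
      simpa using h
    have hnp_le : npExt (gateClub U s) S ≤ s.card := by
      rw [hTnp, ← hcardT, ← hsimg]
      exact Finset.card_le_card himg
    have hnp_ge : s.card ≤ npExt (gateClub U s) S := by
      have hok2' : (ndExt (gateClub U s) S : ℚ) ≤
          1 / (s.card : ℚ) * (npExt (gateClub U s) S : ℚ) + 0 := by
        simpa [gateClub, ClubOk] using hok2
      have hc : (0 : ℚ) < (s.card : ℚ) := by exact_mod_cast hcard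
      have h1 : (1 : ℚ) ≤ (ndExt (gateClub U s) S : ℚ) := by exact_mod_cast hnd
      have h2 : (s.card : ℚ) ≤ (npExt (gateClub U s) S : ℚ) := by
        rw [add_zero, div_mul_eq_mul_div, one_mul, le_div_iff₀ hc] at hok2'
        nlinarith
      exact_mod_cast h2
    have hnp : T.card = s.card := le_antisymm (hTnp ▸ hnp_le) (hTnp ▸ hnp_ge)
    have heq : T.image Prod.snd = s.image (fun v => Sum.inl (s, v)) :=
      Finset.eq_of_subset_of_card_le himg (by rw [hcardT, hnp, hsimg])
    have hpin : (Sum.inl (s, u) : Pat U) ∈ T.image Prod.snd := by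
      rw [heq]; exact Finset.mem_image_of_mem _ hu
    obtain ⟨e, heT, he2⟩ := Finset.mem_image.mp hpin
    have heS : e ∈ S := (Finset.mem_filter.mp heT).1
    rcases hmem e heS with ⟨t, _, rfl⟩ | ⟨t, _, v, _, rfl⟩
    · simp at he2
    · simp only [Prod.snd] at he2
      obtain ⟨rfl, rfl⟩ : t = s ∧ v = u := by
        have := Sum.inl_injective he2
        exact ⟨(Prod.mk.injEq _ _ _ _ ▸ this).1, (Prod.mk.injEq _ _ _ _ ▸ this).2⟩
      exact heS
  -- split the sum
  set P1 : Don U × Pat U → Prop := fun e => ∃ s : Finset U, e = (Sum.inr s, Sum.inr s)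
    with hP1
  set G := S.filter P1 with hG
  set I := S.filter (fun e => ¬ P1 e) with hI
  have hsplit : ∑ e ∈ S, wt U e = ∑ e ∈ G, wt U e + ∑ e ∈ I, wt U e :=
    (Finset.sum_filter_add_sum_filter_not S P1 _).symm
  have hGsum : ∑ e ∈ G, wt U e = (G.card : ℚ) * ((Fintype.card U : ℚ) + 1) := by
    rw [Finset.sum_congr rfl (fun e heG => ?_), Finset.sum_const, nsmul_eq_mul]
    obtain ⟨s, rfl⟩ := (Finset.mem_filter.mp heG).2
    rfl
  have hIsum : ∑ e ∈ I, wt U e = (I.card : ℚ) := by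
    rw [Finset.sum_congr rfl (fun e heI => ?_), Finset.sum_const, nsmul_eq_mul, mul_one]
    obtain ⟨heS, hnp1⟩ := Finset.mem_filter.mp heI
    rcases hmem e heS with ⟨s, _, rfl⟩ | ⟨s, _, u, _, rfl⟩
    · exact absurd ⟨s, rfl⟩ hnp1
    · rfl
  have hIle : I.card ≤ Fintype.card U := by
    have hinj : Set.InjOn Prod.fst (I : Set (Don U × Pat U)) := fun e he e' he' h =>
      hfst e (Finset.mem_filter.mp (hI ▸ he)).1 e' (Finset.mem_filter.mp (hI ▸ he')).1 h
    have hsub : I.image Prod.fst ⊆ Finset.univ.image (Sum.inl : U → Don U) := by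
      intro d hd2
      obtain ⟨e, he, rfl⟩ := Finset.mem_image.mp hd2
      obtain ⟨heS, hnp1⟩ := Finset.mem_filter.mp he
      rcases hmem e heS with ⟨s, _, rfl⟩ | ⟨s, _, u, _, rfl⟩
      · exact absurd ⟨s, rfl⟩ hnp1
      · simp
    calc I.card = (I.image Prod.fst).card := (Finset.card_image_of_injOn hinj).symm
      _ ≤ (Finset.univ.image (Sum.inl : U → Don U)).card := Finset.card_le_card hsub
      _ ≤ Finset.univ.card := Finset.card_image_le
      _ = Fintype.card U := rfl
  -- deduce G.card = k
  have hGk : G.card = k := by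
    set M : ℚ := (Fintype.card U : ℚ) + 1 with hM
    have hMpos : (0 : ℚ) < M := by positivity
    have hw : ∑ e ∈ S, wt U e = (G.card : ℚ) * M + (I.card : ℚ) := by
      rw [hsplit, hGsum, hIsum]
    have hIq : (I.card : ℚ) < M := by
      have : (I.card : ℚ) ≤ (Fintype.card U : ℚ) := by exact_mod_cast hIle
      linarith
    have hIq0 : (0 : ℚ) ≤ (I.card : ℚ) := by positivity
    have h1 : (k : ℚ) < (G.card : ℚ) + 1 := by
      by_contra hcon
      push_neg at hcon
      have : ((G.card : ℚ) + 1) * M ≤ (k : ℚ) * M :=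
        mul_le_mul_of_nonneg_right hcon hMpos.le
      nlinarith [hlo, hw]
    have h2 : (G.card : ℚ) < (k : ℚ) + 1 := by
      by_contra hcon
      push_neg at hcon
      have : ((k : ℚ) + 1) * M ≤ (G.card : ℚ) * M :=
        mul_le_mul_of_nonneg_right hcon hMpos.le
      nlinarith [hhi, hw]
    have h1' : k < G.card + 1 := by exact_mod_cast h1
    have h2' : G.card < k + 1 := by exact_mod_cast h2
    omega
  -- the packing
  set X := fam.filter (fun s => (Sum.inr s, Sum.inr s) ∈ S) with hX
  have hGX : G = X.image (fun s => (Sum.inr s, Sum.inr s)) := by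
    ext e
    simp only [hG, hX, Finset.mem_filter, Finset.mem_image]
    constructor
    · rintro ⟨heS, s, rfl⟩
      refine ⟨s, ⟨?_, heS⟩, rfl⟩
      rcases hmem _ heS with ⟨t, ht, he⟩ | ⟨t, _, v, _, he⟩
      · obtain ⟨rfl, -⟩ : s = t ∧ True := by
          simpa using congrArg Prod.fst he
        exact ht
      · simp at he
    · rintro ⟨s, ⟨hsf, hsS⟩, rfl⟩
      exact ⟨hsS, s, rfl⟩
  have hXcard : X.card = k := by
    rw [← hGk, hGX, Finset.card_image_of_injOn]
    intro a _ b _ h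
    simpa using congrArg Prod.fst h
  refine ⟨hGk, X, Finset.filter_subset _ _, hXcard, ?_, ?_⟩
  · intro a ha b hb hab
    simp only [hX, Finset.coe_filter, Set.mem_setOf_eq] at ha hb
    rw [Finset.disjoint_left]
    intro u hua hub
    have h1 := hgate a ha.1 ha.2 u hua
    have h2 := hgate b hb.1 hb.2 u hub
    have := hfst _ h1 _ h2 rfl
    simp only [Prod.mk.injEq, Sum.inl.injEq, Prod.mk.injEq] at this
    exact hab this.2.1
  · intro s hsf
    simp [hX, hsf]
end

section
/- The standard kidney exchange model embeds into the club model: replacing each non-directed donor by a club with one donor, no patients, and γ = 1, and each donor-patient pair by a club with that donor, that patient, α = 1 and γ = 0, a simultaneous edge selection is feasible in the club model if and only if it decomposes into vertex-disjoint cycles over pair-clubs and chains initiated at altruist clubs, i.e., it is a feasible standard-model solution. -/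
/-- the standard kidney exchange model embeds into the club
model. Clubs are the vertices of type `C`: altruist clubs (one donor, no
patients, `γ = 1`) and pair clubs (one donor, one patient, `α = 1`, `γ = 0`).
`S` is the selected set of inter-club edges; each donor donates at most once
and each patient receives at most once (out/in-degree ≤ 1), and altruists
have no patients hence no incoming edges. Then the club feasibility
constraints (out-degree ≤ in-degree + γ for every club) hold iff `S`
decomposes into vertex-disjoint cycles over pair-clubs and chains initiated
at altruist clubs: every donating club is an altruist or also receives, and
no club on a directed cycle is an altruist. -/
theorem stmt_8 {C : Type} [Fintype C] [DecidableEq C]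
    (altruist : C → Prop) [DecidablePred altruist] (S : Finset (C × C))
    (hloop : ∀ c, (c, c) ∉ S)
    (hout : ∀ c, (S.filter fun e => e.1 = c).card ≤ 1)
    (hin : ∀ c, (S.filter fun e => e.2 = c).card ≤ 1)
    (hnopat : ∀ c, altruist c → ∀ b, (b, c) ∉ S) :
    (∀ c, (S.filter fun e => e.1 = c).card ≤
        (S.filter fun e => e.2 = c).card + (if altruist c then 1 else 0))
      ↔ ((∀ e ∈ S, altruist e.1 ∨ ∃ e' ∈ S, e'.2 = e.1) ∧
          (∀ c, Relation.TransGen (fun a b => (a, b) ∈ S) c c → ¬ altruist c)) := by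
  constructor
  · intro hfeas
    constructor
    · intro e he
      by_cases ha : altruist e.1
      · exact Or.inl ha
      · right
        have h := hfeas e.1
        simp only [if_neg ha, add_zero] at h
        have h1 : 0 < (S.filter fun x => x.1 = e.1).card :=
          Finset.card_pos.mpr ⟨e, Finset.mem_filter.mpr ⟨he, rfl⟩⟩
        have h2 : 0 < (S.filter fun x => x.2 = e.1).card := lt_of_lt_of_le h1 h
        obtain ⟨e', he'⟩ := Finset.card_pos.mp h2
        rw [Finset.mem_filter] at he'
        exact ⟨e', he'.1, he'.2⟩
    · intro c htrans ha
      cases htrans with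
      | single h => exact hnopat c ha c h
      | tail _ h => exact hnopat c ha _ h
  · rintro ⟨h1, _⟩ c
    by_cases ha : altruist c
    · simp only [if_pos ha]
      exact le_trans (hout c) (Nat.le_add_left 1 _)
    · simp only [if_neg ha, add_zero]
      rcases Nat.eq_zero_or_pos (S.filter fun e => e.1 = c).card with h0 | hp
      · simp [h0]
      · obtain ⟨e, he⟩ := Finset.card_pos.mp hp
        rw [Finset.mem_filter] at he
        rcases h1 e he.1 with h | ⟨e', he', heq⟩
        · exact absurd (he.2 ▸ h) ha
        · have : 0 < (S.filter fun x => x.2 = c).card :=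
            Finset.card_pos.mpr ⟨e', Finset.mem_filter.mpr ⟨he', he.2 ▸ heq⟩⟩
          exact le_trans (hout c) this
end

section
/- If in the capped operation-frame formulation the DAG of frames is a total order (a chain) and the constraints hold at every frame, then the real-time feasibility condition n_d^ext(t) ≤ α_c · n_p^ext(t) + γ_c holds at every time t when the frames are executed in that order, under the convention that all transplants in a frame occur simultaneously and a frame's own incoming transplants do not count toward its outgoing constraint. -/
/-- frames totally ordered `t_1 < … < t_k` (indexed by `Fin k`);
`d c j` and `p c j` count external donations from and to club `c` in frame
`j`. If the capped formulation constraint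
`Σ_{j ≤ i} d(c,t_j) ≤ ⌊γ_c + α_c · Σ_{j < i} p(c,t_j)⌋` holds at every frame,
then the real-time feasibility condition
`n_d^ext(t) ≤ α_c · n_p^ext(t) + γ_c` holds at every time, where by the
simultaneity convention the cumulative counts at the execution of frame `i`
are `n_d^ext = Σ_{j ≤ i} d` and `n_p^ext = Σ_{j < i} p` (a frame's own
incoming transplants do not count toward its outgoing constraint). -/
theorem stmt_11 (k : ℕ) {C : Type} (d p : C → Fin k → ℕ) (α γ : C → ℚ)
    (hcon : ∀ (c : C) (i : Fin k),
      ((∑ j ∈ Finset.Iic i, d c j : ℕ) : ℤ) ≤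
        ⌊γ c + α c * ∑ j ∈ Finset.Iio i, (p c j : ℚ)⌋) :
    ∀ (c : C) (i : Fin k),
      ((∑ j ∈ Finset.Iic i, d c j : ℕ) : ℚ) ≤
        α c * (∑ j ∈ Finset.Iio i, (p c j : ℚ)) + γ c := by
  intro c i
  have h := hcon c i
  have hf := Int.floor_le (γ c + α c * ∑ j ∈ Finset.Iio i, (p c j : ℚ))
  have : (((∑ j ∈ Finset.Iic i, d c j : ℕ) : ℤ) : ℚ) ≤
      γ c + α c * ∑ j ∈ Finset.Iio i, (p c j : ℚ) :=
    le_trans (by exact_mod_cast h) hf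
  push_cast at this ⊢
  linarith
end

section
/- In the club model where every club is a pair (one donor, one patient, α = 1, γ = 0) or an altruist (one donor, no patient, γ = 1), with a total order of frames each of size cap K and the per-frame feasibility constraints, any single directed cycle of length L among pair-clubs is schedulable if and only if L ≤ K (all L transplants must occupy one frame), whereas a chain of length L starting at an altruist is schedulable over ⌈L/K⌉ frames for any L. -/
/-- A schedule of the edges of a structure (edges of type `E`, with source and
target clubs `src`, `tgt`) into totally ordered frames `Fin n` is feasible if
at most `K` edges are assigned to each frame, and for each club `c` and frame
`t`, the cumulative donations out of `c` through frame `t` are at most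
`γ c` plus the cumulative receipts of `c` through frame `t` (edges within the
same frame are treated as simultaneous). -/
def SchedFeasible {E C : Type} [Fintype E] [DecidableEq C] [DecidableEq E]
    (K : ℕ) (γ : C → ℕ) (src tgt : E → C) {n : ℕ} (f : E → Fin n) : Prop :=
  (∀ t : Fin n, (Finset.univ.filter fun e => f e = t).card ≤ K) ∧
  (∀ (c : C) (t : Fin n),
    (Finset.univ.filter fun e => src e = c ∧ f e ≤ t).card ≤
      γ c + (Finset.univ.filter fun e => tgt e = c ∧ f e ≤ t).card)

lemma mod_succ_inj {L a b : ℕ} (ha : a < L) (hb : b < L) (h : (a+1)%L = (b+1)%L) : a = b := by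
  rcases Nat.lt_or_ge (a+1) L with h1 | h1
  · rw [Nat.mod_eq_of_lt h1] at h
    rcases Nat.lt_or_ge (b+1) L with h2 | h2
    · rw [Nat.mod_eq_of_lt h2] at h; omega
    · have hb1 : b+1 = L := by omega
      rw [hb1, Nat.mod_self] at h; omega
  · have ha1 : a+1 = L := by omega
    rw [ha1, Nat.mod_self] at h
    rcases Nat.lt_or_ge (b+1) L with h2 | h2
    · rw [Nat.mod_eq_of_lt h2] at h; omega
    · omega

/-- with pair clubs (α = 1, γ = 0) and altruist clubs (γ = 1):
a single directed cycle of length `L` among pair-clubs (clubs `Fin L`, edge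
`i` from club `i` to club `i+1 mod L`) is schedulable iff `L ≤ K` (all `L`
transplants must occupy one frame), whereas a chain of length `L'` starting
at an altruist (clubs `Fin (L'+1)`, club 0 the altruist, edge `i` from club
`i` to club `i+1`) is schedulable over `⌈L'/K⌉` frames for any `L'`. -/
theorem stmt_13 (K L : ℕ) (hK : 0 < K) (hL : 2 ≤ L) :
    ((∃ (n : ℕ) (f : Fin L → Fin n),
        SchedFeasible K (fun _ : Fin L => 0) (fun i => i)
          (fun i => ⟨((i : ℕ) + 1) % L, Nat.mod_lt _ (by omega)⟩) f) ↔ L ≤ K) ∧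
    (∀ L' : ℕ, ∃ f : Fin L' → Fin ((L' + K - 1) / K),
        SchedFeasible K (fun c : Fin (L' + 1) => if c = 0 then 1 else 0)
          (fun i => i.castSucc) (fun i => i.succ) f) := by
  have hL0 : 0 < L := by omega
  constructor
  · constructor
    · rintro ⟨n, f, hcap, hflow⟩
      -- Step: f i ≤ f (succ i)
      have hstep : ∀ i : Fin L,
          f i ≤ f ⟨((i : ℕ) + 1) % L, Nat.mod_lt _ hL0⟩ := by
        intro i
        set c : Fin L := ⟨((i : ℕ) + 1) % L, Nat.mod_lt _ hL0⟩ with hc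
        have h := hflow c (f c)
        have h1 : (1 : ℕ) ≤
            (Finset.univ.filter fun e : Fin L => e = c ∧ f e ≤ f c).card := by
          apply Finset.card_pos.mpr
          exact ⟨c, by simp⟩
        have h2 : 0 < (Finset.univ.filter fun e : Fin L =>
            (⟨((e : ℕ) + 1) % L, Nat.mod_lt _ (by omega)⟩ : Fin L) = c ∧ f e ≤ f c).card := by
          simp only at h
          omega
        obtain ⟨e, he⟩ := Finset.card_pos.mp h2
        simp only [Finset.mem_filter, Finset.mem_univ, true_and] at he
        obtain ⟨he1, he2⟩ := he
        have hev : ((e : ℕ) + 1) % L = ((i : ℕ) + 1) % L := by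
          have := congrArg Fin.val he1
          simpa [hc] using this
        have : e = i := Fin.ext (mod_succ_inj e.isLt i.isLt hev)
        rw [this] at he2
        exact he2
      -- g : ℕ → Fin n, monotone and periodic
      set g : ℕ → Fin n := fun k => f ⟨k % L, Nat.mod_lt _ hL0⟩ with hg
      have hgstep : ∀ k, g k ≤ g (k + 1) := by
        intro k
        have := hstep ⟨k % L, Nat.mod_lt _ hL0⟩
        simpa [hg, Nat.mod_add_mod] using this
      have hgmono : Monotone g := monotone_nat_of_le_succ hgstep
      have hconst : ∀ i : Fin L, f i = f ⟨0, hL0⟩ := by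
        intro i
        have h1 : g 0 ≤ g (i : ℕ) := hgmono (Nat.zero_le _)
        have h2 : g (i : ℕ) ≤ g L := hgmono (le_of_lt i.isLt)
        have h3 : g L = g 0 := by simp [hg, Nat.mod_self]
        have h4 : g (i : ℕ) = g 0 := le_antisymm (h3 ▸ h2) h1
        have h5 : g (i : ℕ) = f i := by
          simp only [hg]
          congr 1
          exact Fin.ext (Nat.mod_eq_of_lt i.isLt)
        have h6 : g 0 = f ⟨0, hL0⟩ := by
          simp [hg]
        rw [← h5, h4, h6]
      have := hcap (f ⟨0, hL0⟩)
      have huniv : (Finset.univ.filter fun e : Fin L => f e = f ⟨0, hL0⟩) = Finset.univ := by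
        ext e; simp [hconst e]
      rw [huniv] at this
      simpa using this
    · intro hLK
      refine ⟨1, fun _ => 0, ?_, ?_⟩
      · intro t
        calc (Finset.univ.filter fun e : Fin L => (0 : Fin 1) = t).card
            ≤ Finset.univ.card := Finset.card_le_univ _
          _ = L := by simp
          _ ≤ K := hLK
      · intro c t
        have htriv : ∀ e : Fin L, ((fun _ : Fin L => (0 : Fin 1)) e) ≤ t :=
          fun e => le_of_eq (Subsingleton.elim _ _)
        simp only
        have hle : (Finset.univ.filter fun e : Fin L => e = c ∧ (0 : Fin 1) ≤ t).card ≤ 1 := by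
          apply Finset.card_le_one.mpr
          intro a ha b hb
          simp only [Finset.mem_filter] at ha hb
          rw [ha.2.1, hb.2.1]
        have hge : 0 < (Finset.univ.filter fun e : Fin L =>
            (⟨((e : ℕ) + 1) % L, Nat.mod_lt _ (by omega)⟩ : Fin L) = c ∧ (0 : Fin 1) ≤ t).card := by
          apply Finset.card_pos.mpr
          refine ⟨⟨((c : ℕ) + (L - 1)) % L, Nat.mod_lt _ hL0⟩, ?_⟩
          simp only [Finset.mem_filter, Finset.mem_univ, true_and]
          constructor
          · apply Fin.ext
            simp only [Nat.mod_add_mod]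
            have : (c : ℕ) + (L - 1) + 1 = (c : ℕ) + L := by omega
            rw [this, Nat.add_mod_right, Nat.mod_eq_of_lt c.isLt]
          · exact le_of_eq (Subsingleton.elim _ _)
        omega
  · intro L'
    have hbound : ∀ i : Fin L', (i : ℕ) / K < (L' + K - 1) / K := by
      intro i
      have hi := i.isLt
      have h1 : L' + K - 1 = (L' - 1) + K := by omega
      have h2 : (i : ℕ) / K ≤ (L' - 1) / K := Nat.div_le_div_right (by omega)
      rw [h1, Nat.add_div_right _ hK]
      omega
    refine ⟨fun i => ⟨(i : ℕ) / K, hbound i⟩, ?_, ?_⟩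
    · intro t
      have : (Finset.univ.filter fun e : Fin L' =>
          (⟨(e : ℕ) / K, hbound e⟩ : Fin ((L' + K - 1) / K)) = t).card ≤ (Finset.range K).card := by
        refine Finset.card_le_card_of_injOn (fun e => (e : ℕ) % K) ?_ ?_
        · intro e _
          simp only [Finset.mem_coe, Finset.mem_range]
          exact Nat.mod_lt _ hK
        · intro a ha b hb hab
          simp only [Finset.mem_coe, Finset.mem_filter, Finset.mem_univ, true_and] at ha hb
          simp only at hab
          have h3 : (a : ℕ) / K = (b : ℕ) / K := congrArg Fin.val (ha.trans hb.symm)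
          have h4 : (a : ℕ) % K = (b : ℕ) % K := hab
          apply Fin.ext
          rw [← Nat.div_add_mod (a : ℕ) K, ← Nat.div_add_mod (b : ℕ) K, h3, h4]
      simpa using this
    · intro c t
      simp only
      have hsrcle : (Finset.univ.filter fun e : Fin L' =>
          e.castSucc = c ∧ (⟨(e : ℕ) / K, hbound e⟩ : Fin ((L' + K - 1) / K)) ≤ t).card ≤ 1 := by
        apply Finset.card_le_one.mpr
        intro a ha b hb
        simp only [Finset.mem_filter, Finset.mem_univ, true_and] at ha hb
        apply Fin.ext
        have h1 := congrArg Fin.val ha.1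
        have h2 := congrArg Fin.val hb.1
        simp only [Fin.coe_castSucc] at h1 h2
        omega
      rcases Finset.eq_empty_or_nonempty (Finset.univ.filter fun e : Fin L' =>
          e.castSucc = c ∧ (⟨(e : ℕ) / K, hbound e⟩ : Fin ((L' + K - 1) / K)) ≤ t) with hemp | ⟨e, he⟩
      · rw [hemp]; simp
      · simp only [Finset.mem_filter, Finset.mem_univ, true_and] at he
        obtain ⟨he1, he2⟩ := he
        have hev : (e : ℕ) = (c : ℕ) := by
          have := congrArg Fin.val he1
          simpa using this
        by_cases hc0 : c = 0
        · have : (if c = 0 then 1 else 0) = 1 := by simp [hc0]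
          omega
        · have hcpos : 0 < (c : ℕ) := by
            rcases Nat.eq_zero_or_pos (c : ℕ) with h | h
            · exact absurd (Fin.ext (by simp [h])) hc0
            · exact h
          have hepos : 0 < (e : ℕ) := by omega
          have hge : 0 < (Finset.univ.filter fun e' : Fin L' =>
              e'.succ = c ∧ (⟨(e' : ℕ) / K, hbound e'⟩ : Fin ((L' + K - 1) / K)) ≤ t).card := by
            apply Finset.card_pos.mpr
            refine ⟨⟨(e : ℕ) - 1, by omega⟩, ?_⟩
            simp only [Finset.mem_filter, Finset.mem_univ, true_and]
            constructor
            · apply Fin.ext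
              simp only [Fin.val_succ]
              omega
            · have h1 : ((e : ℕ) - 1) / K ≤ (e : ℕ) / K := Nat.div_le_div_right (by omega)
              have h2 : (e : ℕ) / K ≤ (t : ℕ) := he2
              exact Fin.mk_le_mk.mpr (le_trans h1 h2)
          have : (if c = 0 then (1:ℕ) else 0) = 0 := by simp [hc0]
          omega
end
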